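/- Let ζ be a nonnegative random variable with E[ζ^{2/α}] < ∞ for some α > 2, let s > 0 and c > 0, and define L(u) = E[exp(−uζ)] for u ≥ 0. Then the limit as λ → +∞ of exp(−2λ ∫₀^∞ (1 − exp(−(2c/λ) ∫₀^∞ (1 − L(s (r² + t²)^{−α/2})) dt)) dr) equals exp(−2πc ∫₀^∞ (1 − L(s ρ^{−α})) ρ dρ). -/

import Mathlib

open MeasureTheory Real Filter Set
open scoped ENNReal

lemma lintegral_even_eq_twice {φ : ℝ → ℝ≥0∞} (hm : Measurable φ)
    (he : ∀ x : ℝ, φ (-x) = φ x) :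
    ∫⁻ x, φ x = 2 * ∫⁻ x in Ioi (0:ℝ), φ x := by
  have hneg : MeasurePreserving (fun x : ℝ => -x) volume volume :=
    Measure.measurePreserving_neg _
  have h1 : ∫⁻ x in Iio (0:ℝ), φ x = ∫⁻ x in Ioi (0:ℝ), φ x := by
    conv_lhs => rw [← hneg.map_eq]
    rw [setLIntegral_map measurableSet_Iio hm hneg.measurable]
    have hpre : (fun x : ℝ => -x) ⁻¹' Iio 0 = Ioi 0 := by ext x; simp
    rw [hpre]
    exact setLIntegral_congr_fun measurableSet_Ioi
      (fun x _ => he x)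
  calc ∫⁻ x, φ x = (∫⁻ x in Ioi (0:ℝ), φ x) + ∫⁻ x in (Ioi (0:ℝ))ᶜ, φ x :=
        (lintegral_add_compl φ measurableSet_Ioi).symm
    _ = 2 * ∫⁻ x in Ioi (0:ℝ), φ x := by
        rw [compl_Ioi,
          show ∫⁻ x in Iic (0:ℝ), φ x = ∫⁻ x in Iio (0:ℝ), φ x from
            setLIntegral_congr (Iio_ae_eq_Iic (a := (0:ℝ))).symm, h1, two_mul]

lemma lintegral_comp_polarCoord_symm' (f : ℝ × ℝ → ℝ≥0∞) :
    ∫⁻ p in polarCoord.target, ENNReal.ofReal p.1 * f (polarCoord.symm p) = ∫⁻ p, f p := by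
  set B : ℝ × ℝ → ℝ × ℝ →L[ℝ] ℝ × ℝ := fun p =>
    LinearMap.toContinuousLinearMap (Matrix.toLin (Module.Basis.finTwoProd ℝ) (Module.Basis.finTwoProd ℝ)
      !![cos p.2, -p.1 * sin p.2; sin p.2, p.1 * cos p.2])
  have A : ∀ p ∈ polarCoord.target, HasFDerivWithinAt polarCoord.symm (B p) polarCoord.target p :=
    fun p _ => (hasFDerivAt_polarCoord_symm p).hasFDerivWithinAt
  have B_det : ∀ p, (B p).det = p.1 := by
    intro p
    conv_rhs => rw [← one_mul p.1, ← cos_sq_add_sin_sq p.2]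
    simp only [B, neg_mul, LinearMap.det_toContinuousLinearMap, LinearMap.det_toLin,
      Matrix.det_fin_two_of, sub_neg_eq_add]
    ring
  symm
  calc
    ∫⁻ p, f p = ∫⁻ p in polarCoord.source, f p := by
      rw [← setLIntegral_univ]
      exact (setLIntegral_congr polarCoord_source_ae_eq_univ).symm
    _ = ∫⁻ p in polarCoord.symm '' polarCoord.target, f p := by
      rw [polarCoord.symm_image_target_eq_source]
    _ = ∫⁻ p in polarCoord.target, ENNReal.ofReal |(B p).det| * f (polarCoord.symm p) := by
      apply lintegral_image_eq_lintegral_abs_det_fderiv_mul volume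
        polarCoord.open_target.measurableSet A polarCoord.symm.injOn f
    _ = ∫⁻ p in polarCoord.target, ENNReal.ofReal p.1 * f (polarCoord.symm p) := by
      refine setLIntegral_congr_fun polarCoord.open_target.measurableSet
        (fun p hp => ?_)
      rw [B_det, abs_of_pos hp.1]

lemma one_sub_exp_neg_le (x : ℝ) : 1 - Real.exp (-x) ≤ x := by
  have := Real.add_one_le_exp (-x); linarith

lemma key_radial_bound {α s z : ℝ} (hα : 2 < α) (hs : 0 < s) (hz : 0 ≤ z) :
    ∫⁻ ρ in Ioi (0:ℝ), ENNReal.ofReal ((1 - Real.exp (-(s * ρ ^ (-α) * z))) * ρ)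
      ≤ ENNReal.ofReal ((1/2 + 1/(α-2)) * (s*z) ^ (2/α)) := by
  rcases hz.eq_or_lt with hz0 | hz0
  · rw [← hz0]
    simp
  have hsz : 0 < s * z := mul_pos hs hz0
  set R : ℝ := (s*z) ^ (1/α) with hR_def
  have hα0 : (0:ℝ) < α := by linarith
  have hR : 0 < R := rpow_pos_of_pos hsz _
  have hRsq : R ^ (2:ℕ) = (s*z) ^ (2/α) := by
    rw [← rpow_natCast R 2, hR_def, ← rpow_mul hsz.le]
    congr 1
    push_cast
    ring
  have hsplit : Ioi (0:ℝ) = Ioc 0 R ∪ Ioi R := (Ioc_union_Ioi_eq_Ioi hR.le).symm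
  rw [hsplit, lintegral_union measurableSet_Ioi (Ioc_disjoint_Ioi le_rfl)]
  have h1 : ∫⁻ ρ in Ioc (0:ℝ) R, ENNReal.ofReal ((1 - Real.exp (-(s * ρ ^ (-α) * z))) * ρ)
      ≤ ENNReal.ofReal (R ^ (2:ℕ) / 2) := by
    have hle : ∫⁻ ρ in Ioc (0:ℝ) R, ENNReal.ofReal ((1 - Real.exp (-(s * ρ ^ (-α) * z))) * ρ)
        ≤ ∫⁻ ρ in Ioc (0:ℝ) R, ENNReal.ofReal ρ := by
      refine setLIntegral_mono' measurableSet_Ioc fun ρ hρ => ?_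
      refine ENNReal.ofReal_le_ofReal ?_
      have h2 : 1 - Real.exp (-(s * ρ ^ (-α) * z)) ≤ 1 := by
        have := Real.exp_pos (-(s * ρ ^ (-α) * z)); linarith
      calc (1 - Real.exp (-(s * ρ ^ (-α) * z))) * ρ ≤ 1 * ρ :=
            mul_le_mul_of_nonneg_right h2 hρ.1.le
        _ = ρ := one_mul ρ
    refine hle.trans (le_of_eq ?_)
    rw [← ofReal_integral_eq_lintegral_ofReal]
    · congr 1
      rw [← intervalIntegral.integral_of_le hR.le, integral_id]
      norm_num
    · exact continuous_id.integrableOn_Ioc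
    · exact (ae_restrict_iff' measurableSet_Ioc).2 (Eventually.of_forall fun ρ hρ => hρ.1.le)
  have h2 : ∫⁻ ρ in Ioi R, ENNReal.ofReal ((1 - Real.exp (-(s * ρ ^ (-α) * z))) * ρ)
      ≤ ENNReal.ofReal (s * z * (R ^ (2-α) / (α-2))) := by
    have hle : ∫⁻ ρ in Ioi R, ENNReal.ofReal ((1 - Real.exp (-(s * ρ ^ (-α) * z))) * ρ)
        ≤ ∫⁻ ρ in Ioi R, ENNReal.ofReal (s * z * ρ ^ (1-α)) := by
      refine setLIntegral_mono' measurableSet_Ioi fun ρ hρ => ?_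
      have hρ0 : (0:ℝ) < ρ := hR.trans hρ
      refine ENNReal.ofReal_le_ofReal ?_
      have hb : 1 - Real.exp (-(s * ρ ^ (-α) * z)) ≤ s * ρ ^ (-α) * z :=
        one_sub_exp_neg_le _
      calc (1 - Real.exp (-(s * ρ ^ (-α) * z))) * ρ ≤ (s * ρ ^ (-α) * z) * ρ :=
            mul_le_mul_of_nonneg_right hb hρ0.le
        _ = s * z * ρ ^ (1-α) := by
            rw [show (1:ℝ)-α = -α + 1 by ring, rpow_add hρ0, rpow_one]; ring
    refine hle.trans (le_of_eq ?_)
    rw [← ofReal_integral_eq_lintegral_ofReal]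
    · congr 1
      rw [MeasureTheory.integral_const_mul, integral_Ioi_rpow_of_lt (by linarith) hR]
      rw [show (1:ℝ)-α+1 = 2-α by ring]
      rw [show -R ^ ((2:ℝ)-α) / (2-α) = R ^ ((2:ℝ)-α) / (α-2) by
        rw [show (2:ℝ)-α = -(α-2) by ring]
        rw [div_neg, neg_div, neg_neg]]
    · exact (integrableOn_Ioi_rpow_of_lt (by linarith : (1:ℝ)-α < -1) hR).const_mul (s*z)
    · refine (ae_restrict_iff' measurableSet_Ioi).2 (Eventually.of_forall fun ρ hρ => ?_)
      have hρ0 : (0:ℝ) < ρ := hR.trans hρ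
      exact mul_nonneg hsz.le (rpow_nonneg hρ0.le _)
  calc _ ≤ ENNReal.ofReal (R ^ (2:ℕ) / 2) + ENNReal.ofReal (s * z * (R ^ (2-α) / (α-2))) :=
        add_le_add h1 h2
    _ = ENNReal.ofReal (R ^ (2:ℕ) / 2 + s * z * (R ^ (2-α) / (α-2))) := by
        rw [ENNReal.ofReal_add (by positivity) (mul_nonneg hsz.le (div_nonneg (rpow_nonneg hR.le _) (by linarith)))]
    _ = ENNReal.ofReal ((1/2 + 1/(α-2)) * (s*z) ^ (2/α)) := by
        congr 1
        have hR2α : s * z * R ^ ((2:ℝ)-α) = (s*z) ^ (2/α) := by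
          rw [hR_def, ← rpow_mul hsz.le]
          nth_rewrite 1 [show s * z = (s*z) ^ (1:ℝ) from (rpow_one _).symm]
          rw [← rpow_add hsz]
          congr 1
          field_simp
          ring
        rw [hRsq, ← mul_div_assoc, hR2α]
        field_simp

lemma measurable_rpow_const (e : ℝ) : Measurable fun x : ℝ => x ^ e := by
  have h : (fun x : ℝ => x ^ e) = fun x =>
      if x = 0 then (if e = 0 then 1 else 0)
      else Real.exp (Real.log x * e) * (if x < 0 then Real.cos (e * π) else 1) := by
    funext x
    rcases lt_trichotomy x 0 with hx | hx | hx
    · rw [Real.rpow_def_of_neg hx, if_neg hx.ne, if_pos hx]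
    · subst hx
      by_cases he : e = 0
      · subst he; simp
      · simp [Real.zero_rpow he, he]
    · rw [Real.rpow_def_of_pos hx, if_neg hx.ne', if_neg (not_lt.2 hx.le), mul_one]
  rw [h]
  have hset0 : MeasurableSet {x : ℝ | x = 0} := by
    simpa using (measurableSet_singleton (0:ℝ))
  have hsetlt : MeasurableSet {x : ℝ | x < 0} := measurableSet_Iio
  exact Measurable.ite hset0 measurable_const
    (((Real.measurable_log.mul measurable_const).exp).mul
      (Measurable.ite hsetlt measurable_const measurable_const))

open scoped Topology

set_option maxHeartbeats 1000000 in
/-- Lemma 2, equation (7): as the road intensity `λ → ∞` with `λ u_b = c` fixed,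
the Laplace transform of the vehicular interference converges to that of a 2D
Poisson point process of intensity `c`. -/
theorem stmt_7 {Ω : Type*} [MeasureSpace Ω] (P : Measure Ω) [IsProbabilityMeasure P]
    (ζ : Ω → ℝ) (hζmeas : Measurable ζ) (hζpos : ∀ ω, 0 ≤ ζ ω)
    (α : ℝ) (hα : 2 < α)
    (hmom : Integrable (fun ω => ζ ω ^ (2 / α)) P)
    (s c : ℝ) (hs : 0 < s) (hc : 0 < c)
    (L : ℝ → ℝ) (hL : ∀ u, 0 ≤ u → L u = ∫ ω, Real.exp (-(u * ζ ω)) ∂P) :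
    Tendsto
      (fun l : ℝ => Real.exp (-(2 * l *
        ∫ r in Set.Ioi (0 : ℝ),
          (1 - Real.exp (-((2 * c / l) *
            ∫ t in Set.Ioi (0 : ℝ),
              (1 - L (s * (r ^ 2 + t ^ 2) ^ (-(α / 2))))))))))
      atTop
      (nhds (Real.exp (-(2 * π * c *
        ∫ ρ in Set.Ioi (0 : ℝ), (1 - L (s * ρ ^ (-α))) * ρ)))) := by
  classical
  set G : ℝ → ℝ := fun u => ∫ ω, (1 - Real.exp (-(max u 0 * ζ ω))) ∂P with hG_def
  have hexple1 : ∀ (a : ℝ) (ω : Ω), 0 ≤ a → Real.exp (-(a * ζ ω)) ≤ 1 := by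
    intro a ω ha
    rw [Real.exp_le_one_iff]
    have : 0 ≤ a * ζ ω := mul_nonneg ha (hζpos ω)
    linarith
  have hint : ∀ u : ℝ, Integrable (fun ω => 1 - Real.exp (-(max u 0 * ζ ω))) P := by
    intro u
    refine (integrable_const (1:ℝ)).mono' ?_ ?_
    · exact (measurable_const.sub ((hζmeas.const_mul (max u 0)).neg.exp)).aestronglyMeasurable
    · refine Eventually.of_forall fun ω => ?_
      have h1 : 0 < Real.exp (-(max u 0 * ζ ω)) := Real.exp_pos _
      have h2 := hexple1 (max u 0) ω (le_max_right u 0)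
      rw [Real.norm_eq_abs, abs_le]
      exact ⟨by linarith, by linarith⟩
  have hG_nonneg : ∀ u, 0 ≤ G u := by
    intro u
    apply integral_nonneg
    intro ω
    simp only [Pi.zero_apply]
    have h2 := hexple1 (max u 0) ω (le_max_right u 0)
    linarith
  have hG_mono : Monotone G := by
    intro u v huv
    refine integral_mono (hint u) (hint v) fun ω => ?_
    simp only
    have h1 : max u 0 * ζ ω ≤ max v 0 * ζ ω :=
      mul_le_mul_of_nonneg_right (max_le_max huv le_rfl) (hζpos ω)
    have := Real.exp_le_exp.2 (neg_le_neg h1)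
    linarith
  have hG_meas : Measurable G := hG_mono.measurable
  have hGL : ∀ u : ℝ, 0 ≤ u → 1 - L u = G u := by
    intro u hu
    have hexpint : Integrable (fun ω => Real.exp (-(u * ζ ω))) P := by
      have h := (integrable_const (1:ℝ)).sub (hint u)
      exact h.congr (Eventually.of_forall fun ω => by simp [max_eq_left hu])
    rw [hL u hu, hG_def]
    simp only [max_eq_left hu]
    rw [integral_sub (integrable_const 1) hexpint, integral_const]
    simp
  set g : ℝ → ℝ≥0∞ := fun u => ENNReal.ofReal (G u) with hg_def
  have hg_meas : Measurable g := ENNReal.measurable_ofReal.comp hG_meas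
  have hg_repr : ∀ u : ℝ, 0 ≤ u →
      g u = ∫⁻ ω, ENNReal.ofReal (1 - Real.exp (-(u * ζ ω))) ∂P := by
    intro u hu
    have hnn : 0 ≤ᵐ[P] fun ω => 1 - Real.exp (-(u * ζ ω)) :=
      Eventually.of_forall fun ω => by
        simp only [Pi.zero_apply]
        have := hexple1 u ω hu; linarith
    have h := ofReal_integral_eq_lintegral_ofReal
      (by simpa [max_eq_left hu] using hint u) hnn
    simp only [hg_def, hG_def, max_eq_left hu]
    exact h
  -- measurability of the planar integrand
  have hmap_meas : Measurable fun p : ℝ × ℝ => s * (p.1 ^ 2 + p.2 ^ 2) ^ (-(α/2)) :=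
    ((measurable_rpow_const (-(α/2))).comp
      ((measurable_fst.pow_const 2).add (measurable_snd.pow_const 2))).const_mul s
  have hgp_meas : Measurable fun p : ℝ × ℝ => g (s * (p.1 ^ 2 + p.2 ^ 2) ^ (-(α/2))) :=
    hg_meas.comp hmap_meas
  set K : ℝ → ℝ≥0∞ := fun r => ∫⁻ t in Ioi (0:ℝ), g (s * (r ^ 2 + t ^ 2) ^ (-(α/2))) with hK_def
  set I : ℝ → ℝ := fun r => ∫ t in Ioi (0:ℝ), G (s * (r ^ 2 + t ^ 2) ^ (-(α/2))) with hI_def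
  have hK_meas : Measurable K := hgp_meas.lintegral_prod_right'
  have hIK : ∀ r : ℝ, I r = (K r).toReal := by
    intro r
    rw [hI_def]
    simp only
    have hmt : Measurable fun t : ℝ => G (s * (r ^ 2 + t ^ 2) ^ (-(α/2))) :=
      hG_meas.comp (hmap_meas.comp measurable_prodMk_left)
    have hnn : 0 ≤ᵐ[volume.restrict (Ioi (0:ℝ))]
        fun t : ℝ => G (s * (r ^ 2 + t ^ 2) ^ (-(α/2))) :=
      Eventually.of_forall fun t => hG_nonneg _
    rw [integral_eq_lintegral_of_nonneg_ae hnn hmt.aestronglyMeasurable]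
  set J : ℝ≥0∞ := ∫⁻ ρ in Ioi (0:ℝ), g (s * ρ ^ (-α)) * ENNReal.ofReal ρ with hJ_def
  have hmeasρ : Measurable fun ρ : ℝ => s * ρ ^ (-α) :=
    (measurable_rpow_const (-α)).const_mul s
  have hJ_lt : J < ⊤ := by
    have hm2 : Measurable fun q : ℝ × Ω =>
        ENNReal.ofReal ((1 - Real.exp (-(s * q.1 ^ (-α) * ζ q.2))) * q.1) := by
      refine ENNReal.measurable_ofReal.comp ?_
      exact (measurable_const.sub ((((measurable_rpow_const (-α)).comp measurable_fst).const_mul s).mul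
        (hζmeas.comp measurable_snd)).neg.exp).mul measurable_fst
    have hstep1 : J = ∫⁻ ρ in Ioi (0:ℝ),
        ∫⁻ ω, ENNReal.ofReal ((1 - Real.exp (-(s * ρ ^ (-α) * ζ ω))) * ρ) ∂P := by
      refine setLIntegral_congr_fun measurableSet_Ioi (fun ρ hρ => ?_)
      have hρ0 : (0:ℝ) < ρ := hρ
      have hu : 0 ≤ s * ρ ^ (-α) := mul_nonneg hs.le (rpow_nonneg hρ0.le _)
      have hmω : Measurable fun ω => ENNReal.ofReal (1 - Real.exp (-(s * ρ ^ (-α) * ζ ω))) :=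
        ENNReal.measurable_ofReal.comp
          (measurable_const.sub ((hζmeas.const_mul (s * ρ ^ (-α))).neg.exp))
      rw [hg_repr _ hu, ← lintegral_mul_const _ hmω]
      refine lintegral_congr fun ω => ?_
      rw [← ENNReal.ofReal_mul (by
        have := hexple1 (s * ρ ^ (-α)) ω hu; linarith)]
    have hswap : (∫⁻ ρ in Ioi (0:ℝ),
          ∫⁻ ω, ENNReal.ofReal ((1 - Real.exp (-(s * ρ ^ (-α) * ζ ω))) * ρ) ∂P)
        = ∫⁻ ω, (∫⁻ ρ in Ioi (0:ℝ),
            ENNReal.ofReal ((1 - Real.exp (-(s * ρ ^ (-α) * ζ ω))) * ρ)) ∂P :=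
      lintegral_lintegral_swap hm2.aemeasurable
    have hbound : (∫⁻ ω, (∫⁻ ρ in Ioi (0:ℝ),
          ENNReal.ofReal ((1 - Real.exp (-(s * ρ ^ (-α) * ζ ω))) * ρ)) ∂P)
        ≤ ∫⁻ ω, ENNReal.ofReal ((1/2 + 1/(α-2)) * (s * ζ ω) ^ (2/α)) ∂P :=
      lintegral_mono fun ω => key_radial_bound hα hs (hζpos ω)
    have hfin : (∫⁻ ω, ENNReal.ofReal ((1/2 + 1/(α-2)) * (s * ζ ω) ^ (2/α)) ∂P) < ⊤ := by
      have hint2 : Integrable (fun ω => (1/2 + 1/(α-2)) * (s * ζ ω) ^ (2/α)) P := by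
        have heq : (fun ω => (1/2 + 1/(α-2)) * (s * ζ ω) ^ (2/α))
            = fun ω => ((1/2 + 1/(α-2)) * s ^ (2/α)) * ζ ω ^ (2/α) := by
          funext ω; rw [Real.mul_rpow hs.le (hζpos ω)]; ring
        rw [heq]; exact hmom.const_mul _
      calc (∫⁻ ω, ENNReal.ofReal ((1/2 + 1/(α-2)) * (s * ζ ω) ^ (2/α)) ∂P)
          ≤ ∫⁻ ω, ‖(1/2 + 1/(α-2)) * (s * ζ ω) ^ (2/α)‖ₑ ∂P :=
            lintegral_ofReal_le_lintegral_enorm _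
        _ < ⊤ := hint2.2
    rw [hstep1, hswap]
    exact lt_of_le_of_lt hbound hfin
  set Q : ℝ≥0∞ := ∫⁻ r in Ioi (0:ℝ), K r with hQ_def
  set Fp : ℝ≥0∞ := ∫⁻ p : ℝ × ℝ, g (s * (p.1 ^ 2 + p.2 ^ 2) ^ (-(α/2))) with hFp_def
  have hF4Q : Fp = 4 * Q := by
    have heven_t : ∀ r : ℝ, (∫⁻ t : ℝ, g (s * (r ^ 2 + t ^ 2) ^ (-(α/2)))) = 2 * K r := by
      intro r
      exact lintegral_even_eq_twice
        (hg_meas.comp (hmap_meas.comp measurable_prodMk_left))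
        (fun t => by rw [neg_sq])
    have heven_r : ∀ r : ℝ, K (-r) = K r := by
      intro r
      rw [hK_def]
      simp only [neg_sq]
    rw [hFp_def, Measure.volume_eq_prod, lintegral_prod _ hgp_meas.aemeasurable]
    rw [lintegral_congr heven_t, lintegral_const_mul 2 hK_meas,
      lintegral_even_eq_twice hK_meas heven_r, ← mul_assoc]
    norm_num
    rfl
  have hFpolar : Fp = ENNReal.ofReal (2 * π) * J := by
    rw [hFp_def, ← lintegral_comp_polarCoord_symm']
    have hcongr : ∀ p ∈ polarCoord.target,
        ENNReal.ofReal p.1 * g (s * ((polarCoord.symm p).1 ^ 2 + (polarCoord.symm p).2 ^ 2) ^ (-(α/2)))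
          = ENNReal.ofReal p.1 * g (s * p.1 ^ (-α)) := by
      rintro ⟨ρ, θ⟩ ⟨hρ, hθ⟩
      simp only [polarCoord_symm_apply]
      congr 2
      have h1 : (ρ * Real.cos θ) ^ 2 + (ρ * Real.sin θ) ^ 2 = ρ ^ 2 := by
        have h := Real.sin_sq_add_cos_sq θ; nlinarith [h]
      rw [h1, ← Real.rpow_natCast ρ 2, ← Real.rpow_mul (le_of_lt hρ)]
      have he2 : ((2:ℕ):ℝ) * -(α/2) = -α := by push_cast; ring
      rw [he2]
    rw [setLIntegral_congr_fun polarCoord.open_target.measurableSet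
      hcongr]
    have htarget : polarCoord.target = Ioi (0:ℝ) ×ˢ Ioo (-π) π := rfl
    have hmprod : Measurable fun q : ℝ × ℝ => ENNReal.ofReal q.1 * g (s * q.1 ^ (-α)) :=
      (ENNReal.measurable_ofReal.comp measurable_fst).mul
        ((hg_meas.comp hmeasρ).comp measurable_fst)
    rw [htarget, Measure.volume_eq_prod, ← Measure.prod_restrict,
      lintegral_prod _ hmprod.aemeasurable]
    have hinner : ∀ ρ : ℝ, (∫⁻ _θ in Ioo (-π) π,
        ENNReal.ofReal ρ * g (s * ρ ^ (-α))) = (ENNReal.ofReal ρ * g (s * ρ ^ (-α))) * ENNReal.ofReal (2*π) := by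
      intro ρ
      rw [setLIntegral_const, Real.volume_Ioo]
      congr 2
      ring
    have hmρ2 : Measurable fun ρ : ℝ => ENNReal.ofReal ρ * g (s * ρ ^ (-α)) :=
      (ENNReal.measurable_ofReal.comp measurable_id).mul (hg_meas.comp hmeasρ)
    rw [lintegral_congr hinner, lintegral_mul_const _ hmρ2]
    rw [mul_comm]
    congr 1
    rw [hJ_def]
    exact lintegral_congr fun ρ => mul_comm _ _
  have hJ_ne : J ≠ ⊤ := hJ_lt.ne
  have h4Q : 4 * Q = ENNReal.ofReal (2 * π) * J := by rw [← hF4Q, hFpolar]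
  have hRHS_ne : ENNReal.ofReal (2 * π) * J ≠ ⊤ :=
    ENNReal.mul_ne_top ENNReal.ofReal_ne_top hJ_ne
  have hQ_ne : Q ≠ ⊤ := by
    intro h
    apply hRHS_ne
    rw [← h4Q, h]
    simp
  have hQtoReal : 4 * Q.toReal = 2 * π * J.toReal := by
    have h := congrArg ENNReal.toReal h4Q
    rw [ENNReal.toReal_mul, ENNReal.toReal_mul, ENNReal.toReal_ofReal (by positivity)] at h
    simpa using h
  have hIint : Integrable I (volume.restrict (Ioi (0:ℝ))) := by
    have h := integrable_toReal_of_lintegral_ne_top hK_meas.aemeasurable hQ_ne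
    exact h.congr (Eventually.of_forall fun r => (hIK r).symm)
  have hIint_eq : ∫ r in Ioi (0:ℝ), I r = Q.toReal := by
    rw [show (fun r => I r) = fun r => (K r).toReal from funext hIK]
    exact integral_toReal hK_meas.aemeasurable (ae_lt_top hK_meas hQ_ne)
  have hB : (∫ ρ in Ioi (0:ℝ), (1 - L (s * ρ ^ (-α))) * ρ) = J.toReal := by
    have h1 : EqOn (fun ρ : ℝ => (1 - L (s * ρ ^ (-α))) * ρ)
        (fun ρ : ℝ => G (s * ρ ^ (-α)) * ρ) (Ioi (0:ℝ)) := by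
      intro ρ hρ
      have hρ0 : (0:ℝ) < ρ := hρ
      simp only
      rw [hGL _ (mul_nonneg hs.le (rpow_nonneg hρ0.le _))]
    rw [setIntegral_congr_fun measurableSet_Ioi h1]
    rw [integral_eq_lintegral_of_nonneg_ae
      ((ae_restrict_iff' measurableSet_Ioi).2 (Eventually.of_forall fun ρ hρ =>
        mul_nonneg (hG_nonneg _) (le_of_lt hρ)))
      ((hG_meas.comp hmeasρ).mul measurable_id').aestronglyMeasurable]
    congr 1
    refine setLIntegral_congr_fun measurableSet_Ioi (fun ρ hρ => ?_)
    rw [ENNReal.ofReal_mul (hG_nonneg _)]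
  have hI_nonneg : ∀ r, 0 ≤ I r := fun r => by rw [hIK]; exact ENNReal.toReal_nonneg
  have hIsm : AEStronglyMeasurable I (volume.restrict (Ioi (0:ℝ))) := hIint.1
  have hmain : Tendsto (fun l : ℝ => ∫ r in Ioi (0:ℝ), l * (1 - Real.exp (-(2 * c / l * I r))))
      atTop (nhds (∫ r in Ioi (0:ℝ), 2 * c * I r)) := by
    refine tendsto_integral_filter_of_dominated_convergence (fun r => 2 * c * I r)
      ?_ ?_ (hIint.const_mul (2*c)) ?_
    · refine Eventually.of_forall fun l => ?_
      have hcont : Continuous fun x : ℝ => l * (1 - Real.exp (-(2 * c / l * x))) :=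
        continuous_const.mul (continuous_const.sub
          (Real.continuous_exp.comp (continuous_const.mul continuous_id).neg))
      exact hcont.comp_aestronglyMeasurable hIsm
    · filter_upwards [eventually_gt_atTop (0:ℝ)] with l hl
      refine Eventually.of_forall fun r => ?_
      have hx : 0 ≤ 2 * c / l * I r := by
        have := hI_nonneg r
        positivity
      have h1 : Real.exp (-(2 * c / l * I r)) ≤ 1 := by
        rw [Real.exp_le_one_iff]; linarith
      have h2 : 1 - Real.exp (-(2 * c / l * I r)) ≤ 2 * c / l * I r := one_sub_exp_neg_le _
      have h0 : (0:ℝ) < Real.exp (-(2 * c / l * I r)) := Real.exp_pos _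
      rw [Real.norm_eq_abs, abs_of_nonneg (by nlinarith)]
      calc l * (1 - Real.exp (-(2 * c / l * I r))) ≤ l * (2 * c / l * I r) := by nlinarith
        _ = 2 * c * I r := by field_simp
    · refine Eventually.of_forall fun r => ?_
      rcases eq_or_lt_of_le (hI_nonneg r) with ha | ha
      · have hzero : (fun l : ℝ => l * (1 - Real.exp (-(2 * c / l * I r)))) = fun _ => (0:ℝ) := by
          funext l; rw [← ha]; simp
        rw [hzero, ← ha]
        simpa using (tendsto_const_nhds : Tendsto (fun _ : ℝ => (0:ℝ)) atTop (nhds 0))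
      · set b : ℝ := 2 * c * I r with hb_def
        have hb : 0 < b := by
          rw [hb_def]; positivity
        have hd : HasDerivAt (fun x : ℝ => 1 - Real.exp (-x)) 1 0 := by
          have h1 : HasDerivAt (fun x : ℝ => -x) (-1) 0 := (hasDerivAt_id 0).neg
          have h2 := h1.exp
          have h3 := (hasDerivAt_const (0:ℝ) (1:ℝ)).sub h2
          have h4 : HasDerivAt (fun x : ℝ => 1 - Real.exp (-x)) (0 - Real.exp (-0) * -1) 0 := h3
          simpa using h4
        have hslope := hasDerivAt_iff_tendsto_slope.1 hd
        have hbl : Tendsto (fun l : ℝ => b / l) atTop (nhdsWithin 0 {(0:ℝ)}ᶜ) := by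
          apply tendsto_nhdsWithin_of_tendsto_nhds_of_eventually_within
          · exact tendsto_const_nhds.div_atTop tendsto_id
          · filter_upwards [eventually_gt_atTop (0:ℝ)] with l hl
            exact (div_pos hb hl).ne'
        have hcomp := hslope.comp hbl
        have hfinal := hcomp.const_mul b
        have hgoal : Tendsto (fun l : ℝ => b * slope (fun x : ℝ => 1 - Real.exp (-x)) 0 (b / l))
            atTop (nhds b) := by simpa using hfinal
        refine Tendsto.congr' ?_ hgoal
        filter_upwards [eventually_gt_atTop (0:ℝ)] with l hl
        have hbl0 : b / l ≠ 0 := (div_pos hb hl).ne'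
        rw [slope_def_field]
        simp only [Real.exp_zero, neg_zero, sub_zero, sub_self]
        rw [show 2 * c / l * I r = b / l by rw [hb_def]; ring]
        field_simp
  have hE : Tendsto (fun l : ℝ => 2 * ∫ r in Ioi (0:ℝ), l * (1 - Real.exp (-(2 * c / l * I r))))
      atTop (nhds (2 * π * c * J.toReal)) := by
    have h2 := hmain.const_mul (2:ℝ)
    have hval : 2 * ∫ r in Ioi (0:ℝ), 2 * c * I r = 2 * π * c * J.toReal := by
      rw [MeasureTheory.integral_const_mul, hIint_eq]
      nlinarith [hQtoReal]
    rw [← hval]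
    exact h2
  have hfull : Tendsto (fun l : ℝ => 2 * l * ∫ r in Ioi (0:ℝ),
      (1 - Real.exp (-(2 * c / l * I r)))) atTop (nhds (2 * π * c * J.toReal)) := by
    refine hE.congr fun l => ?_
    rw [MeasureTheory.integral_const_mul]
    ring
  have hcomp := (Real.continuous_exp.tendsto _).comp hfull.neg
  rw [hB]
  refine hcomp.congr fun l => ?_
  have hfun : (∫ r in Ioi (0:ℝ), (1 - Real.exp (-(2 * c / l *
        ∫ t in Ioi (0:ℝ), (1 - L (s * (r ^ 2 + t ^ 2) ^ (-(α / 2)))))))) =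
      ∫ r in Ioi (0:ℝ), (1 - Real.exp (-(2 * c / l * I r))) := by
    refine setIntegral_congr_fun measurableSet_Ioi fun r hr => ?_
    have hr0 : (0:ℝ) < r := hr
    have hinner : (∫ t in Ioi (0:ℝ), (1 - L (s * (r ^ 2 + t ^ 2) ^ (-(α / 2))))) = I r := by
      refine setIntegral_congr_fun measurableSet_Ioi fun t ht => ?_
      have hpos : (0:ℝ) < r ^ 2 + t ^ 2 :=
        add_pos_of_pos_of_nonneg (pow_pos hr0 2) (sq_nonneg t)
      exact hGL _ (mul_nonneg hs.le (rpow_nonneg hpos.le _))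
    rw [hinner]
  simp only [Function.comp]
  rw [hfun]
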